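/- arXiv:2011.07708 — 3 statements merged into one kernel-verified Lean document; each statement's English description precedes it below -/
import Mathlib

section
/- Let ν ∈ Z_5 be the square root of -1 congruent to 2 mod 5. The image in GL_2(F_5) (via reduction mod 5 of the embedding 1↦I, i↦(0 1;-1 0), j↦(ν 0;0 -ν), k↦(0 -ν;-ν 0)) of the 24-element Hurwitz unit group intersects the subgroup B = {(a b; 0 1)} trivially (only in the identity). -/
open Matrix

instance : Fact (Nat.Prime 5) := ⟨by norm_num⟩

/-- Coordinates (a,b,c,d) of the 24 Hurwitz units, viewed inside `ℤ_[5]` (note `1/2 ∈ ℤ_[5]`):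
the eight units `±1, ±i, ±j, ±k` and the sixteen `(±1 ± i ± j ± k)/2`. -/
def hurwitzUnitCoords : Set (ℤ_[5] × ℤ_[5] × ℤ_[5] × ℤ_[5]) :=
  {p | p ∈ ({(1,0,0,0), (-1,0,0,0), (0,1,0,0), (0,-1,0,0),
              (0,0,1,0), (0,0,-1,0), (0,0,0,1), (0,0,0,-1)} :
        Set (ℤ_[5] × ℤ_[5] × ℤ_[5] × ℤ_[5])) ∨
    ((2 * p.1 = 1 ∨ 2 * p.1 = -1) ∧ (2 * p.2.1 = 1 ∨ 2 * p.2.1 = -1) ∧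
     (2 * p.2.2.1 = 1 ∨ 2 * p.2.2.1 = -1) ∧ (2 * p.2.2.2 = 1 ∨ 2 * p.2.2.2 = -1))}

/-- The embedding of a quaternion `a + bi + cj + dk` into `M₂(ℤ₅)` determined by
`1 ↦ I`, `i ↦ (0 1; -1 0)`, `j ↦ (ν 0; 0 -ν)`, `k ↦ (0 -ν; -ν 0)`. -/
noncomputable def quatEmbed (ν : ℤ_[5]) (p : ℤ_[5] × ℤ_[5] × ℤ_[5] × ℤ_[5]) :
    Matrix (Fin 2) (Fin 2) ℤ_[5] :=
  p.1 • (1 : Matrix (Fin 2) (Fin 2) ℤ_[5]) + p.2.1 • !![0, 1; -1, 0] +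
    p.2.2.1 • !![ν, 0; 0, -ν] + p.2.2.2 • !![0, -ν; -ν, 0]

/-- Reduction of a matrix over `ℤ₅` modulo 5. -/
noncomputable def reduceMod5 (m : Matrix (Fin 2) (Fin 2) ℤ_[5]) : Matrix (Fin 2) (Fin 2) (ZMod 5) :=
  m.map PadicInt.toZMod

/-- The subgroup `B = {(a b; 0 1) : a ∈ F₅ˣ, b ∈ F₅}`, as a set of matrices. -/
def borelSet : Set (Matrix (Fin 2) (Fin 2) (ZMod 5)) :=
  {m | ∃ a b : ZMod 5, a ≠ 0 ∧ m = !![a, b; 0, 1]}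

lemma reduce_quatEmbed (ν : ℤ_[5]) (hν2 : PadicInt.toZMod ν = 2)
    (p : ℤ_[5] × ℤ_[5] × ℤ_[5] × ℤ_[5]) :
    reduceMod5 (quatEmbed ν p) =
      !![PadicInt.toZMod p.1 + 2 * PadicInt.toZMod p.2.2.1,
         PadicInt.toZMod p.2.1 - 2 * PadicInt.toZMod p.2.2.2;
         -PadicInt.toZMod p.2.1 - 2 * PadicInt.toZMod p.2.2.2,
         PadicInt.toZMod p.1 - 2 * PadicInt.toZMod p.2.2.1] := by
  ext i j
  fin_cases i <;> fin_cases j <;>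
    simp [reduceMod5, quatEmbed, Matrix.map_apply, Matrix.one_apply, hν2, mul_comm] <;> ring

/-- The image in `GL₂(F₅)` of the 24-element Hurwitz unit group, via reduction mod 5 of the
embedding determined by the square root `ν` of `-1` with `ν ≡ 2 (mod 5)`, meets
`B = {(a b; 0 1)}` only in the identity. -/
theorem hurwitz_units_meet_borel_trivially
    (ν : ℤ_[5]) (hν : ν ^ 2 = -1) (hν2 : PadicInt.toZMod ν = 2) :
    ∀ p ∈ hurwitzUnitCoords, reduceMod5 (quatEmbed ν p) ∈ borelSet →
      reduceMod5 (quatEmbed ν p) = 1 := by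
  intro p hp hmem
  obtain ⟨a, b, ha, hEq⟩ := hmem
  rw [reduce_quatEmbed ν hν2] at hEq ⊢
  set A := PadicInt.toZMod p.1 with hA
  set B := PadicInt.toZMod p.2.1 with hB
  set C := PadicInt.toZMod p.2.2.1 with hC
  set D := PadicInt.toZMod p.2.2.2 with hD
  have h10 : -B - 2 * D = 0 := by
    have := congrFun (congrFun hEq 1) 0
    simpa using this
  have h11 : A - 2 * C = 1 := by
    have := congrFun (congrFun hEq 1) 1
    simpa using this
  have hcond : ((A = 1 ∧ B = 0 ∧ C = 0 ∧ D = 0) ∨ (A = -1 ∧ B = 0 ∧ C = 0 ∧ D = 0) ∨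
      (A = 0 ∧ B = 1 ∧ C = 0 ∧ D = 0) ∨ (A = 0 ∧ B = -1 ∧ C = 0 ∧ D = 0) ∨
      (A = 0 ∧ B = 0 ∧ C = 1 ∧ D = 0) ∨ (A = 0 ∧ B = 0 ∧ C = -1 ∧ D = 0) ∨
      (A = 0 ∧ B = 0 ∧ C = 0 ∧ D = 1) ∨ (A = 0 ∧ B = 0 ∧ C = 0 ∧ D = -1)) ∨
      ((2 * A = 1 ∨ 2 * A = -1) ∧ (2 * B = 1 ∨ 2 * B = -1) ∧
       (2 * C = 1 ∨ 2 * C = -1) ∧ (2 * D = 1 ∨ 2 * D = -1)) := by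
    rcases hp with h | ⟨h1, h2, h3, h4⟩
    · left
      simp only [Set.mem_insert_iff, Set.mem_singleton_iff] at h
      rcases h with h|h|h|h|h|h|h|h <;> subst h <;>
        simp [hA, hB, hC, hD, Prod.ext_iff]
    · right
      have f : ∀ x : ℤ_[5], (2 * x = 1 ∨ 2 * x = -1) →
          (2 * PadicInt.toZMod x = 1 ∨ 2 * PadicInt.toZMod x = -1) := by
        intro x hx
        rcases hx with hx | hx
        · left
          have := congrArg PadicInt.toZMod hx
          simpa [map_ofNat] using this
        · right
          have := congrArg PadicInt.toZMod hx
          simpa [map_ofNat] using this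
      exact ⟨f _ h1, f _ h2, f _ h3, f _ h4⟩
  have key : ∀ A B C D : ZMod 5,
      (((A = 1 ∧ B = 0 ∧ C = 0 ∧ D = 0) ∨ (A = -1 ∧ B = 0 ∧ C = 0 ∧ D = 0) ∨
      (A = 0 ∧ B = 1 ∧ C = 0 ∧ D = 0) ∨ (A = 0 ∧ B = -1 ∧ C = 0 ∧ D = 0) ∨
      (A = 0 ∧ B = 0 ∧ C = 1 ∧ D = 0) ∨ (A = 0 ∧ B = 0 ∧ C = -1 ∧ D = 0) ∨
      (A = 0 ∧ B = 0 ∧ C = 0 ∧ D = 1) ∨ (A = 0 ∧ B = 0 ∧ C = 0 ∧ D = -1)) ∨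
        ((2 * A = 1 ∨ 2 * A = -1) ∧ (2 * B = 1 ∨ 2 * B = -1) ∧
         (2 * C = 1 ∨ 2 * C = -1) ∧ (2 * D = 1 ∨ 2 * D = -1))) →
      -B - 2 * D = 0 → A - 2 * C = 1 →
      !![A + 2 * C, B - 2 * D; -B - 2 * D, A - 2 * C] = 1 := by
    set_option synthInstance.maxSize 2000 in
    set_option synthInstance.maxHeartbeats 1000000 in
    set_option maxHeartbeats 2000000 in decide
  exact key A B C D hcond h10 h11
end

section
/- With notation as above, the image of the Hurwitz unit group O_D^× in GL_2(F_5) forms a complete set of coset representatives for GL_2(F_5)/B, where B = {(a b; 0 1) : a ∈ F_5^×, b ∈ F_5}; i.e., GL_2(F_5) is the disjoint union over u ∈ O_D^× of the cosets uB. -/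
open Matrix

/-! ### Auxiliary machinery -/

/-- The 24 quadruples of residues mod 5 of the coordinates of the Hurwitz units. -/
def redCoords : List (ZMod 5 × ZMod 5 × ZMod 5 × ZMod 5) :=
  [(1,0,0,0), (4,0,0,0), (0,1,0,0), (0,4,0,0), (0,0,1,0), (0,0,4,0), (0,0,0,1), (0,0,0,4),
   (3,3,3,3), (3,3,3,2), (3,3,2,3), (3,3,2,2), (3,2,3,3), (3,2,3,2), (3,2,2,3), (3,2,2,2),
   (2,3,3,3), (2,3,3,2), (2,3,2,3), (2,3,2,2), (2,2,3,3), (2,2,3,2), (2,2,2,3), (2,2,2,2)]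

/-- The mod-5 embedding on coordinate quadruples (with `ν ≡ 2`). -/
def emQ (r : ZMod 5 × ZMod 5 × ZMod 5 × ZMod 5) : ZMod 5 × ZMod 5 × ZMod 5 × ZMod 5 :=
  (r.1 + 2 * r.2.2.1, r.2.1 - 2 * r.2.2.2, -r.2.1 - 2 * r.2.2.2, r.1 - 2 * r.2.2.1)

/-- The entry quadruples of the 24 reduced Hurwitz-unit matrices. -/
def S24 : List (ZMod 5 × ZMod 5 × ZMod 5 × ZMod 5) := redCoords.map emQ

/-- Quadruple of entries to a 2×2 matrix. -/
def toMat (t : ZMod 5 × ZMod 5 × ZMod 5 × ZMod 5) : Matrix (Fin 2) (Fin 2) (ZMod 5) :=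
  !![t.1, t.2.1; t.2.2.1, t.2.2.2]

/-- Reduction of a quadruple of 5-adic integers mod 5. -/
noncomputable def redtuple (p : ℤ_[5] × ℤ_[5] × ℤ_[5] × ℤ_[5]) :
    ZMod 5 × ZMod 5 × ZMod 5 × ZMod 5 :=
  (PadicInt.toZMod p.1, PadicInt.toZMod p.2.1, PadicInt.toZMod p.2.2.1, PadicInt.toZMod p.2.2.2)

set_option maxHeartbeats 4000000 in
theorem key1 : ∀ w x y z : ZMod 5, w * z - x * y = 0 ∨
    ∃ t ∈ S24, ∃ a : ZMod 5, a ≠ 0 ∧ w = t.1 * a ∧ y = t.2.2.1 * a ∧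
      ∃ b : ZMod 5, x = t.1 * b + t.2.1 ∧ z = t.2.2.1 * b + t.2.2.2 := by decide

set_option maxHeartbeats 4000000 in
theorem key2 : ∀ t1 ∈ S24, ∀ t2 ∈ S24, ∀ a a' : ZMod 5, a ≠ 0 → a' ≠ 0 →
    t1.1 * a = t2.1 * a' → t1.2.2.1 * a = t2.2.2.1 * a' →
    ∀ b b' : ZMod 5, t1.1 * b + t1.2.1 = t2.1 * b' + t2.2.1 →
      t1.2.2.1 * b + t1.2.2.2 = t2.2.2.1 * b' + t2.2.2.2 → t1 = t2 := by decide

theorem isUnit_two5 : IsUnit (2 : ℤ_[5]) := by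
  by_contra h
  rw [PadicInt.not_isUnit_iff, PadicInt.norm_lt_one_iff_dvd] at h
  obtain ⟨x, hx⟩ := h
  have h2 := congrArg PadicInt.toZMod hx
  simp only [_root_.map_mul, map_natCast, map_ofNat] at h2
  have key : ∀ y : ZMod 5, (2 : ZMod 5) ≠ ((5 : ℕ) : ZMod 5) * y := by decide
  exact key _ h2

/-- A 5-adic half. -/
noncomputable def hf : ℤ_[5] := ((isUnit_two5.unit⁻¹ : ℤ_[5]ˣ) : ℤ_[5])

theorem two_hf : 2 * hf = 1 := by
  have h := isUnit_two5.unit.mul_inv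
  rwa [isUnit_two5.unit_spec] at h

theorem two_neg_hf : 2 * (-hf) = -1 := by rw [mul_neg, two_hf]

theorem toZMod_half {x : ℤ_[5]} (h : 2 * x = 1) : PadicInt.toZMod x = 3 := by
  have h2 := congrArg PadicInt.toZMod h
  simp only [_root_.map_mul, _root_.map_one, map_ofNat] at h2
  have : ∀ y : ZMod 5, (2 : ZMod 5) * y = 1 → y = 3 := by decide
  exact this _ h2

theorem toZMod_neg_half {x : ℤ_[5]} (h : 2 * x = -1) : PadicInt.toZMod x = 2 := by
  have h2 := congrArg PadicInt.toZMod h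
  simp only [_root_.map_mul, _root_.map_one, _root_.map_neg, map_ofNat] at h2
  have : ∀ y : ZMod 5, (2 : ZMod 5) * y = -1 → y = 2 := by decide
  exact this _ h2

theorem hf_red : PadicInt.toZMod hf = 3 := toZMod_half two_hf

theorem red_embed (ν : ℤ_[5]) (hν2 : PadicInt.toZMod ν = 2)
    (p : ℤ_[5] × ℤ_[5] × ℤ_[5] × ℤ_[5]) :
    reduceMod5 (quatEmbed ν p) = toMat (emQ (redtuple p)) := by
  ext i j
  fin_cases i <;> fin_cases j <;>
    simp [reduceMod5, quatEmbed, toMat, emQ, redtuple, Matrix.map_apply, Matrix.one_apply,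
      hν2, smul_eq_mul, _root_.map_add, _root_.map_mul, _root_.map_neg, _root_.map_one,
      _root_.map_zero] <;> ring

theorem redmem {p : ℤ_[5] × ℤ_[5] × ℤ_[5] × ℤ_[5]} (hp : p ∈ hurwitzUnitCoords) :
    redtuple p ∈ redCoords := by
  rcases hp with h | ⟨h1, h2, h3, h4⟩
  · simp only [Set.mem_insert_iff, Set.mem_singleton_iff] at h
    rcases h with rfl | rfl | rfl | rfl | rfl | rfl | rfl | rfl <;>
      simp only [redtuple, _root_.map_one, _root_.map_zero, _root_.map_neg] <;> decide
  · have e1 : PadicInt.toZMod p.1 = 3 ∨ PadicInt.toZMod p.1 = 2 :=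
      h1.imp toZMod_half toZMod_neg_half
    have e2 : PadicInt.toZMod p.2.1 = 3 ∨ PadicInt.toZMod p.2.1 = 2 :=
      h2.imp toZMod_half toZMod_neg_half
    have e3 : PadicInt.toZMod p.2.2.1 = 3 ∨ PadicInt.toZMod p.2.2.1 = 2 :=
      h3.imp toZMod_half toZMod_neg_half
    have e4 : PadicInt.toZMod p.2.2.2 = 3 ∨ PadicInt.toZMod p.2.2.2 = 2 :=
      h4.imp toZMod_half toZMod_neg_half
    have key : ∀ w x y z : ZMod 5, (w = 3 ∨ w = 2) → (x = 3 ∨ x = 2) → (y = 3 ∨ y = 2) →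
        (z = 3 ∨ z = 2) → (w, x, y, z) ∈ redCoords := by decide
    exact key _ _ _ _ e1 e2 e3 e4

theorem lift_red {r : ZMod 5 × ZMod 5 × ZMod 5 × ZMod 5} (hr : r ∈ redCoords) :
    ∃ p ∈ hurwitzUnitCoords, redtuple p = r := by
  have hcase : (r = (1,0,0,0) ∨ r = (4,0,0,0) ∨ r = (0,1,0,0) ∨ r = (0,4,0,0) ∨
      r = (0,0,1,0) ∨ r = (0,0,4,0) ∨ r = (0,0,0,1) ∨ r = (0,0,0,4)) ∨
      ((r.1 = 3 ∨ r.1 = 2) ∧ (r.2.1 = 3 ∨ r.2.1 = 2) ∧ (r.2.2.1 = 3 ∨ r.2.2.1 = 2) ∧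
       (r.2.2.2 = 3 ∨ r.2.2.2 = 2)) := by
    revert hr; revert r; decide
  have hlift : ∀ y : ZMod 5, (y = 3 ∨ y = 2) →
      ∃ x : ℤ_[5], (2 * x = 1 ∨ 2 * x = -1) ∧ PadicInt.toZMod x = y := by
    rintro y (rfl | rfl)
    · exact ⟨hf, Or.inl two_hf, hf_red⟩
    · exact ⟨-hf, Or.inr two_neg_hf, toZMod_neg_half two_neg_hf⟩
  rcases hcase with (rfl | rfl | rfl | rfl | rfl | rfl | rfl | rfl) | ⟨h1, h2, h3, h4⟩
  · exact ⟨(1,0,0,0), Or.inl (Or.inl rfl),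
      by simp only [redtuple, _root_.map_one, _root_.map_zero, _root_.map_neg]; try decide⟩
  · exact ⟨(-1,0,0,0), Or.inl (Or.inr (Or.inl rfl)),
      by simp only [redtuple, _root_.map_one, _root_.map_zero, _root_.map_neg]; try decide⟩
  · exact ⟨(0,1,0,0), Or.inl (Or.inr (Or.inr (Or.inl rfl))),
      by simp only [redtuple, _root_.map_one, _root_.map_zero, _root_.map_neg]; try decide⟩
  · exact ⟨(0,-1,0,0), Or.inl (Or.inr (Or.inr (Or.inr (Or.inl rfl)))),
      by simp only [redtuple, _root_.map_one, _root_.map_zero, _root_.map_neg]; try decide⟩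
  · exact ⟨(0,0,1,0), Or.inl (Or.inr (Or.inr (Or.inr (Or.inr (Or.inl rfl))))),
      by simp only [redtuple, _root_.map_one, _root_.map_zero, _root_.map_neg]; try decide⟩
  · exact ⟨(0,0,-1,0), Or.inl (Or.inr (Or.inr (Or.inr (Or.inr (Or.inr (Or.inl rfl)))))),
      by simp only [redtuple, _root_.map_one, _root_.map_zero, _root_.map_neg]; try decide⟩
  · exact ⟨(0,0,0,1), Or.inl (Or.inr (Or.inr (Or.inr (Or.inr (Or.inr (Or.inr (Or.inl rfl))))))),
      by simp only [redtuple, _root_.map_one, _root_.map_zero, _root_.map_neg]; try decide⟩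
  · exact ⟨(0,0,0,-1), Or.inl (Or.inr (Or.inr (Or.inr (Or.inr (Or.inr (Or.inr (Or.inr rfl))))))),
      by simp only [redtuple, _root_.map_one, _root_.map_zero, _root_.map_neg]; try decide⟩
  · obtain ⟨x1, hx1, hv1⟩ := hlift _ h1
    obtain ⟨x2, hx2, hv2⟩ := hlift _ h2
    obtain ⟨x3, hx3, hv3⟩ := hlift _ h3
    obtain ⟨x4, hx4, hv4⟩ := hlift _ h4
    exact ⟨(x1, x2, x3, x4), Or.inr ⟨hx1, hx2, hx3, hx4⟩,
      by simp only [redtuple, hv1, hv2, hv3, hv4]⟩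

theorem mulB (t : ZMod 5 × ZMod 5 × ZMod 5 × ZMod 5) (a b : ZMod 5) :
    toMat t * !![a, b; 0, 1] =
      toMat (t.1 * a, t.1 * b + t.2.1, t.2.2.1 * a, t.2.2.1 * b + t.2.2.2) := by
  simp [toMat, Matrix.mul_fin_two]

theorem toMat_inj {s t : ZMod 5 × ZMod 5 × ZMod 5 × ZMod 5} (h : toMat s = toMat t) :
    s = t := by
  obtain ⟨s1, s2, s3, s4⟩ := s
  obtain ⟨t1, t2, t3, t4⟩ := t
  have e00 := congrFun (congrFun h 0) 0
  have e01 := congrFun (congrFun h 0) 1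
  have e10 := congrFun (congrFun h 1) 0
  have e11 := congrFun (congrFun h 1) 1
  simp [toMat] at e00 e01 e10 e11
  simp [e00, e01, e10, e11]

/-- The image in `GL₂(F₅)` of the Hurwitz unit group `O_D^×`, via reduction mod 5 of the
embedding determined by `ν`, forms a complete set of coset representatives for
`GL₂(F₅)/B`: every invertible matrix `g` lies in `uB` for a unique `u` in the image. -/
theorem hurwitz_units_coset_representatives
    (ν : ℤ_[5]) (hν : ν ^ 2 = -1) (hν2 : PadicInt.toZMod ν = 2) :
    ∀ g : Matrix (Fin 2) (Fin 2) (ZMod 5), IsUnit g →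
      ∃! u : Matrix (Fin 2) (Fin 2) (ZMod 5),
        (∃ p ∈ hurwitzUnitCoords, u = reduceMod5 (quatEmbed ν p)) ∧
        ∃ b ∈ borelSet, g = u * b := by
  intro g hg
  have hdet : g 0 0 * g 1 1 - g 0 1 * g 1 0 ≠ 0 := by
    have h := (Matrix.isUnit_iff_isUnit_det g).mp hg
    rw [Matrix.det_fin_two] at h
    exact (isUnit_iff_ne_zero.mp h)
  rcases key1 (g 0 0) (g 0 1) (g 1 0) (g 1 1) with hzero | ⟨t, htS, a, ha, h1, h3, b, h2, h4⟩
  · exact absurd hzero hdet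
  obtain ⟨r, hr, rfl⟩ := List.mem_map.mp htS
  obtain ⟨p, hp, hpr⟩ := lift_red hr
  have hup : reduceMod5 (quatEmbed ν p) = toMat (emQ r) := by
    rw [red_embed ν hν2 p, hpr]
  refine ⟨toMat (emQ r), ⟨⟨p, hp, hup.symm⟩, ⟨!![a, b; 0, 1], ⟨a, b, ha, rfl⟩, ?_⟩⟩, ?_⟩
  · rw [mulB]
    ext i j
    fin_cases i <;> fin_cases j
    · simpa [toMat] using h1
    · simpa [toMat] using h2
    · simpa [toMat] using h3
    · simpa [toMat] using h4
  · rintro u' ⟨⟨p', hp', rfl⟩, B', ⟨a', b', ha', rfl⟩, hg'⟩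
    rw [red_embed ν hν2 p'] at hg' ⊢
    have ht'S : emQ (redtuple p') ∈ S24 := List.mem_map_of_mem (f := emQ) (redmem hp')
    rw [mulB] at hg'
    have e00 : g 0 0 = (emQ (redtuple p')).1 * a' := by
      have := congrFun (congrFun hg' 0) 0; simpa [toMat] using this
    have e01 : g 0 1 = (emQ (redtuple p')).1 * b' + (emQ (redtuple p')).2.1 := by
      have := congrFun (congrFun hg' 0) 1; simpa [toMat] using this
    have e10 : g 1 0 = (emQ (redtuple p')).2.2.1 * a' := by
      have := congrFun (congrFun hg' 1) 0; simpa [toMat] using this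
    have e11 : g 1 1 = (emQ (redtuple p')).2.2.1 * b' + (emQ (redtuple p')).2.2.2 := by
      have := congrFun (congrFun hg' 1) 1; simpa [toMat] using this
    have heq : emQ (redtuple p') = emQ r :=
      key2 _ ht'S _ htS a' a ha' ha (e00.symm.trans h1) (e10.symm.trans h3)
        b' b (e01.symm.trans h2) (e11.symm.trans h4)
    rw [heq]
end

section
/- Let α ∈ Q_5 and k ≥ 2. The coefficient a_{i,j} of x^i y^j in the formal power series expansion of ((α-1)x+α)^{k-1} / ((α-1)x + α + (α-1)xy - αy) is given by a_{i,j} = α^{k-i-2} (1-α)^i · Σ_{n=0}^{min(i,j)} (-1)^{i-n} C(j,n) C(k-j-2, i-n), where C denotes binomial coefficients (with the usual convention for C(m,r) with possibly negative m, interpreted via the generalized binomial coefficient). -/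
open PowerSeries

/-- The generalized binomial coefficient `C(m, r) = m(m-1)⋯(m-r+1)/r!` for an integer `m`
(possibly negative), with values in `ℚ₅`. -/
noncomputable def gbinom (m : ℤ) (r : ℕ) : ℚ_[5] :=
  (∏ t ∈ Finset.range r, ((m : ℚ_[5]) - (t : ℚ_[5]))) / (r.factorial : ℚ_[5])

lemma gbinom_zero (m : ℤ) : gbinom m 0 = 1 := by simp [gbinom]

lemma gbinom_pascal (m : ℤ) (r : ℕ) :
    gbinom (m + 1) (r + 1) = gbinom m (r + 1) + gbinom m r := by
  have hprod : ∏ t ∈ Finset.range (r + 1), (((m + 1 : ℤ) : ℚ_[5]) - (t : ℚ_[5]))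
      = ((m : ℚ_[5]) + 1) * ∏ t ∈ Finset.range r, ((m : ℚ_[5]) - (t : ℚ_[5])) := by
    have hterm : ∀ t ∈ Finset.range r, ((m + 1 : ℤ) : ℚ_[5]) - ((t + 1 : ℕ) : ℚ_[5])
        = (m : ℚ_[5]) - (t : ℚ_[5]) := by
      intro t _; push_cast; ring
    rw [Finset.prod_range_succ', Finset.prod_congr rfl hterm]
    push_cast
    ring
  have h2 : ((r.factorial : ℚ_[5])) ≠ 0 := Nat.cast_ne_zero.mpr (Nat.factorial_ne_zero _)
  have h3 : ((r : ℚ_[5]) + 1) ≠ 0 := by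
    have : ((r + 1 : ℕ) : ℚ_[5]) ≠ 0 := Nat.cast_ne_zero.mpr (Nat.succ_ne_zero r)
    push_cast at this; exact this
  unfold gbinom
  rw [hprod, Finset.prod_range_succ, Nat.factorial_succ]
  push_cast
  field_simp
  ring

lemma gbinom_zero_left (r : ℕ) : gbinom 0 (r + 1) = 0 := by
  unfold gbinom
  rw [Finset.prod_eq_zero (Finset.mem_range.mpr (Nat.succ_pos r))]
  · simp
  · simp

lemma gbinom_natCast (n : ℕ) (r : ℕ) : gbinom (n : ℤ) r = (n.choose r : ℚ_[5]) := by
  induction n generalizing r with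
  | zero =>
    cases r with
    | zero => simp [gbinom_zero]
    | succ r => simpa using gbinom_zero_left r
  | succ n ih =>
    cases r with
    | zero => simp [gbinom_zero]
    | succ r =>
      have : ((n : ℤ) + 1) = ((n + 1 : ℕ) : ℤ) := by push_cast; ring
      rw [← this, gbinom_pascal, ih, ih, Nat.choose_succ_succ]
      push_cast; ring

lemma coeff_linear_pow (a b : ℚ_[5]) (j n : ℕ) :
    PowerSeries.coeff (R := ℚ_[5]) n ((PowerSeries.C (R := ℚ_[5]) a + PowerSeries.C (R := ℚ_[5]) b * X) ^ j)
      = (j.choose n : ℚ_[5]) * a ^ (j - n) * b ^ n := by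
  induction j generalizing n with
  | zero =>
    cases n with
    | zero => simp
    | succ n => simp
  | succ j ih =>
    rw [pow_succ, mul_add, ← mul_assoc]
    rw [map_add, PowerSeries.coeff_mul_C]
    cases n with
    | zero =>
      rw [PowerSeries.coeff_zero_mul_X]
      simp [ih 0, pow_succ]
    | succ n =>
      rw [PowerSeries.coeff_succ_mul_X, PowerSeries.coeff_mul_C, ih, ih]
      rcases lt_trichotomy n j with h | h | h
      · have h1 : j - n = (j - (n+1)) + 1 := by omega
        have hpow : a ^ (j - n) = a ^ (j - (n+1)) * a := by rw [h1, pow_succ]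
        rw [Nat.choose_succ_succ j n]
        simp only [Nat.succ_sub_succ]
        rw [hpow]
        push_cast
        ring
      · subst h
        simp [Nat.choose_succ_self, Nat.choose_self]
        ring
      · rw [Nat.choose_eq_zero_of_lt h, Nat.choose_eq_zero_of_lt (by omega),
          Nat.choose_eq_zero_of_lt (by omega)]
        simp

noncomputable def Eser (α : ℚ_[5]) (m : ℤ) : PowerSeries ℚ_[5] :=
  PowerSeries.mk fun r => gbinom m r * (α - 1) ^ r * α ^ (m - (r : ℤ))

lemma Eser_mul (α : ℚ_[5]) (hα : α ≠ 0) (m : ℤ) :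
    Eser α m * (PowerSeries.C (R := ℚ_[5]) (α - 1) * X + PowerSeries.C (R := ℚ_[5]) α) = Eser α (m + 1) := by
  have expand : Eser α m * (PowerSeries.C (R := ℚ_[5]) (α - 1) * X + PowerSeries.C (R := ℚ_[5]) α)
      = (Eser α m * PowerSeries.C (R := ℚ_[5]) (α - 1)) * X + Eser α m * PowerSeries.C (R := ℚ_[5]) α := by
    ring
  rw [expand]
  ext r
  cases r with
  | zero =>
    rw [map_add, PowerSeries.coeff_zero_mul_X, PowerSeries.coeff_mul_C]
    simp only [Eser, coeff_mk, gbinom_zero, pow_zero, Nat.cast_zero, sub_zero, zero_add,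
      one_mul, mul_one]
    rw [← zpow_add_one₀ hα]
  | succ r =>
    rw [map_add, PowerSeries.coeff_succ_mul_X, PowerSeries.coeff_mul_C, PowerSeries.coeff_mul_C]
    simp only [Eser, coeff_mk]
    have hz : α ^ (m - ((r : ℤ) + 1)) * α = α ^ (m - (r : ℤ)) := by
      rw [← zpow_add_one₀ hα]; congr 1; ring
    have hc1 : (((r : ℕ) + 1 : ℕ) : ℤ) = (r : ℤ) + 1 := by push_cast; ring
    rw [hc1, gbinom_pascal]
    have hc2 : m + 1 - ((r : ℤ) + 1) = m - (r : ℤ) := by ring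
    rw [hc2]
    calc gbinom m r * (α - 1) ^ r * α ^ (m - (r : ℤ)) * (α - 1) +
          gbinom m (r + 1) * (α - 1) ^ (r + 1) * α ^ (m - ((r : ℤ) + 1)) * α
        = gbinom m r * (α - 1) ^ (r + 1) * α ^ (m - (r : ℤ)) +
          gbinom m (r + 1) * (α - 1) ^ (r + 1) * (α ^ (m - ((r : ℤ) + 1)) * α) := by ring
      _ = (gbinom m (r + 1) + gbinom m r) * (α - 1) ^ (r + 1) * α ^ (m - (r : ℤ)) := by
          rw [hz]; ring

lemma Eser_zero (α : ℚ_[5]) : Eser α 0 = 1 := by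
  ext r
  cases r with
  | zero => simp [Eser, gbinom_zero]
  | succ r => simp [Eser, gbinom_zero_left, PowerSeries.coeff_one]

lemma Eser_pow (α : ℚ_[5]) (hα : α ≠ 0) (m : ℤ) (n : ℕ) :
    Eser α m * (PowerSeries.C (R := ℚ_[5]) (α - 1) * X + PowerSeries.C (R := ℚ_[5]) α) ^ n
      = Eser α (m + n) := by
  induction n with
  | zero => simp
  | succ n ih =>
    rw [pow_succ, ← mul_assoc, ih, Eser_mul α hα]
    congr 1
    push_cast
    ring

lemma pow_eq_Eser (α : ℚ_[5]) (hα : α ≠ 0) (n : ℕ) :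
    (PowerSeries.C (R := ℚ_[5]) (α - 1) * X + PowerSeries.C (R := ℚ_[5]) α) ^ n = Eser α n := by
  have := Eser_pow α hα 0 n
  rwa [Eser_zero, one_mul, zero_add] at this

/-- For `α ≠ 0` and `k ≥ 2`, the coefficient `a_{i,j}` of `x^i y^j` in the expansion of
`((α-1)x+α)^{k-1} / ((α-1)x + α + (α-1)xy - αy)` (formulated via the defining relation
`((α-1)x + α + (α-1)xy - αy) · F = ((α-1)x+α)^{k-1}`) is
`α^{k-i-2} (1-α)^i Σ_{n=0}^{min(i,j)} (-1)^{i-n} C(j,n) C(k-j-2, i-n)`. -/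
theorem coeff_H_delta2 (α : ℚ_[5]) (hα : α ≠ 0) (k : ℕ) (hk : 2 ≤ k)
    (F : PowerSeries (PowerSeries ℚ_[5]))
    (hF : (PowerSeries.C (R := PowerSeries ℚ_[5])
          (PowerSeries.C (R := ℚ_[5]) (α - 1) * PowerSeries.X + PowerSeries.C (R := ℚ_[5]) α) +
        PowerSeries.C (R := PowerSeries ℚ_[5])
          (PowerSeries.C (R := ℚ_[5]) (α - 1) * PowerSeries.X - PowerSeries.C (R := ℚ_[5]) α) *
          PowerSeries.X) * F =
      PowerSeries.C (R := PowerSeries ℚ_[5])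
        ((PowerSeries.C (R := ℚ_[5]) (α - 1) * PowerSeries.X + PowerSeries.C (R := ℚ_[5]) α) ^ (k - 1))) :
    ∀ i j : ℕ,
      PowerSeries.coeff (R := ℚ_[5]) i (PowerSeries.coeff (R := PowerSeries ℚ_[5]) j F) =
        α ^ ((k : ℤ) - i - 2) * (1 - α) ^ i *
          ∑ n ∈ Finset.range (min i j + 1),
            (-1 : ℚ_[5]) ^ (i - n) * (j.choose n : ℚ_[5]) * gbinom ((k : ℤ) - j - 2) (i - n) := by
  set P : PowerSeries ℚ_[5] := PowerSeries.C (R := ℚ_[5]) (α - 1) * X + PowerSeries.C (R := ℚ_[5]) α with hP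
  set Q : PowerSeries ℚ_[5] := PowerSeries.C (R := ℚ_[5]) (α - 1) * X - PowerSeries.C (R := ℚ_[5]) α with hQdef
  set B : PowerSeries ℚ_[5] := PowerSeries.C (R := ℚ_[5]) α + PowerSeries.C (R := ℚ_[5]) (1 - α) * X with hBdef
  have hQB : Q = -B := by
    rw [hQdef, hBdef, show (α - 1) = -(1 - α) from by ring, map_neg]
    ring
  set G : PowerSeries (PowerSeries ℚ_[5]) :=
    PowerSeries.mk (fun j => B ^ j * Eser α ((k : ℤ) - (j : ℤ) - 2)) with hGdef
  -- the multiplier is nonzero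
  have hP0 : P ≠ 0 := by
    intro h
    have := congrArg (PowerSeries.constantCoeff (R := ℚ_[5])) h
    simp [hP] at this
    exact hα this
  have hM0 : (PowerSeries.C (R := PowerSeries ℚ_[5]) P + PowerSeries.C (R := PowerSeries ℚ_[5]) Q * X)
      ≠ 0 := by
    intro h
    have := congrArg (PowerSeries.constantCoeff (R := PowerSeries ℚ_[5])) h
    simp at this
    exact hP0 this
  -- the candidate satisfies the same equation
  have hMG : (PowerSeries.C (R := PowerSeries ℚ_[5]) P + PowerSeries.C (R := PowerSeries ℚ_[5]) Q * X) * G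
      = PowerSeries.C (R := PowerSeries ℚ_[5]) (P ^ (k - 1)) := by
    have expand : (PowerSeries.C (R := PowerSeries ℚ_[5]) P
          + PowerSeries.C (R := PowerSeries ℚ_[5]) Q * X) * G
        = PowerSeries.C (R := PowerSeries ℚ_[5]) P * G
          + PowerSeries.C (R := PowerSeries ℚ_[5]) Q * (G * X) := by ring
    rw [expand]
    ext j
    cases j with
    | zero =>
      rw [map_add, PowerSeries.coeff_C_mul, PowerSeries.coeff_C_mul,
        PowerSeries.coeff_zero_mul_X, PowerSeries.coeff_zero_C]
      simp only [hGdef, coeff_mk, Nat.cast_zero, pow_zero, one_mul, mul_zero, add_zero]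
      rw [mul_comm, Eser_mul α hα]
      rw [pow_eq_Eser α hα (k - 1)]
      congr 1
      have : ((k - 1 : ℕ) : ℤ) = (k : ℤ) - 1 := by omega
      rw [this]; ring
    | succ j =>
      rw [map_add, PowerSeries.coeff_C_mul, PowerSeries.coeff_C_mul,
        PowerSeries.coeff_succ_mul_X, PowerSeries.coeff_C]
      simp only [hGdef, coeff_mk, Nat.succ_ne_zero, if_false]
      have hc : ((k : ℤ) - ((j : ℕ) + 1 : ℕ) - 2) + 1 = (k : ℤ) - (j : ℤ) - 2 := by
        push_cast; ring
      have h1 : P * (B ^ (j + 1) * Eser α ((k : ℤ) - ((j : ℕ) + 1 : ℕ) - 2))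
          = B ^ (j + 1) * Eser α ((k : ℤ) - (j : ℤ) - 2) := by
        rw [← hc, ← Eser_mul α hα ((k : ℤ) - ((j : ℕ) + 1 : ℕ) - 2), ← hP]
        ring
      rw [h1, hQB, pow_succ]
      ring
  have hFG : F = G := by
    apply mul_left_cancel₀ hM0
    rw [hF, hMG]
  intro i j
  rw [hFG]
  simp only [hGdef, coeff_mk]
  rw [PowerSeries.coeff_mul, Finset.Nat.sum_antidiagonal_eq_sum_range_succ_mk]
  -- extend the RHS sum to range (i+1)
  have hsub : Finset.range (min i j + 1) ⊆ Finset.range (i + 1) :=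
    Finset.range_subset_range.mpr (by omega)
  have hext : ∑ n ∈ Finset.range (min i j + 1),
        (-1 : ℚ_[5]) ^ (i - n) * (j.choose n : ℚ_[5]) * gbinom ((k : ℤ) - j - 2) (i - n)
      = ∑ n ∈ Finset.range (i + 1),
        (-1 : ℚ_[5]) ^ (i - n) * (j.choose n : ℚ_[5]) * gbinom ((k : ℤ) - j - 2) (i - n) := by
    apply Finset.sum_subset hsub
    intro n hn hn'
    have : j < n := by
      simp only [Finset.mem_range] at hn hn'
      omega
    rw [Nat.choose_eq_zero_of_lt this]
    simp
  rw [hext, Finset.mul_sum]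
  apply Finset.sum_congr rfl
  intro n hn
  dsimp only
  have hni : n ≤ i := by simpa [Nat.lt_succ_iff] using hn
  rw [hBdef, coeff_linear_pow]
  simp only [Eser, coeff_mk]
  rcases le_or_gt n j with hnj | hnj
  · -- main case
    have hA : α ^ (j - n) * α ^ ((k : ℤ) - (j : ℤ) - 2 - ((i - n : ℕ) : ℤ))
        = α ^ ((k : ℤ) - (i : ℤ) - 2) := by
      rw [← zpow_natCast α (j - n), ← zpow_add₀ hα]
      congr 1
      have c1 : ((j - n : ℕ) : ℤ) = (j : ℤ) - n := by omega
      have c2 : ((i - n : ℕ) : ℤ) = (i : ℤ) - n := by omega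
      rw [c1, c2]; ring
    have hB1 : ((α - 1) : ℚ_[5]) ^ (i - n) = (-1 : ℚ_[5]) ^ (i - n) * (1 - α) ^ (i - n) := by
      rw [show (α - 1 : ℚ_[5]) = -1 * (1 - α) from by ring, mul_pow]
    have hB2 : (1 - α) ^ n * (1 - α) ^ (i - n) = (1 - α) ^ i := by
      rw [← pow_add]; congr 1; omega
    calc (j.choose n : ℚ_[5]) * α ^ (j - n) * (1 - α) ^ n *
          (gbinom ((k : ℤ) - (j : ℤ) - 2) (i - n) * (α - 1) ^ (i - n) *
            α ^ ((k : ℤ) - (j : ℤ) - 2 - ((i - n : ℕ) : ℤ)))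
        = (α ^ (j - n) * α ^ ((k : ℤ) - (j : ℤ) - 2 - ((i - n : ℕ) : ℤ))) *
          ((1 - α) ^ n * ((-1 : ℚ_[5]) ^ (i - n) * (1 - α) ^ (i - n))) *
          ((j.choose n : ℚ_[5]) * gbinom ((k : ℤ) - (j : ℤ) - 2) (i - n)) := by
          rw [hB1]; ring
      _ = α ^ ((k : ℤ) - (i : ℤ) - 2) * ((1 - α) ^ n * (1 - α) ^ (i - n)) *
          ((-1 : ℚ_[5]) ^ (i - n) * (j.choose n : ℚ_[5]) *
            gbinom ((k : ℤ) - (j : ℤ) - 2) (i - n)) := by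
          rw [hA]; ring
      _ = α ^ ((k : ℤ) - (i : ℤ) - 2) * (1 - α) ^ i *
          ((-1 : ℚ_[5]) ^ (i - n) * (j.choose n : ℚ_[5]) *
            gbinom ((k : ℤ) - (j : ℤ) - 2) (i - n)) := by rw [hB2]
  · rw [Nat.choose_eq_zero_of_lt hnj]
    simp
end
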